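/- Let D_{A,C} denote the linear operator on n×n symmetric real matrices given by D_{A,C}(X) = A X A' + C X C'. If there exist symmetric matrices S ≻ 0 and Q ≻ 0 with A'SA + C'SC + Q = S, then every eigenvalue λ of the operator D_{A,C} satisfies |λ| < 1. -/

import Mathlib

open Matrix

noncomputable def qf {n : ℕ} (x : Fin n → ℂ) : ℝ := ∑ i, Complex.normSq (x i)

lemma qf_nonneg {n : ℕ} (x : Fin n → ℂ) : 0 ≤ qf x :=
  Finset.sum_nonneg fun _ _ => Complex.normSq_nonneg _

lemma qf_eq_dot {n : ℕ} (x : Fin n → ℂ) : star x ⬝ᵥ x = (qf x : ℂ) := by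
  simp only [qf, dotProduct, Pi.star_apply, Complex.ofReal_sum]
  exact Finset.sum_congr rfl fun i _ => by
    rw [Complex.star_def, mul_comm, Complex.mul_conj]

lemma qf_eq_zero_iff {n : ℕ} (x : Fin n → ℂ) : qf x = 0 ↔ x = 0 := by
  rw [qf, Finset.sum_eq_zero_iff_of_nonneg (fun i _ => Complex.normSq_nonneg _)]
  constructor
  · intro h; funext i
    exact Complex.normSq_eq_zero.mp (h i (Finset.mem_univ i))
  · intro h i _; simp [h]

section main

lemma posdef_complexify {n : ℕ} {R : Matrix (Fin n) (Fin n) ℝ} (hR : R.PosDef)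
    (x : Fin n → ℂ) (hx : x ≠ 0) :
    0 < (star x ⬝ᵥ ((R.map Complex.ofReal) *ᵥ x)).re := by
  set u : Fin n → ℝ := fun i => (x i).re with hu
  set v : Fin n → ℝ := fun i => (x i).im with hv
  have key : (star x ⬝ᵥ ((R.map Complex.ofReal) *ᵥ x)).re
      = u ⬝ᵥ (R *ᵥ u) + v ⬝ᵥ (R *ᵥ v) := by
    simp only [dotProduct, Matrix.mulVec, Matrix.map_apply, Pi.star_apply,
      Complex.re_sum, Finset.mul_sum, Finset.sum_add_distrib, ← Finset.sum_add_distrib]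
    refine Finset.sum_congr rfl fun i _ => Finset.sum_congr rfl fun j _ => ?_
    simp only [Complex.star_def, Complex.mul_re, Complex.conj_re, Complex.conj_im,
      Complex.ofReal_re, Complex.ofReal_im, hu, hv]
    ring_nf
    simp [Complex.mul_im]
    ring
  rw [key]
  have hcases : u ≠ 0 ∨ v ≠ 0 := by
    by_contra h
    push_neg at h
    apply hx
    funext i
    have h1 := congrFun h.1 i
    have h2 := congrFun h.2 i
    exact Complex.ext (by simpa using h1) (by simpa using h2)
  have hnn : ∀ w : Fin n → ℝ, 0 ≤ w ⬝ᵥ (R *ᵥ w) := by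
    intro w
    have := hR.posSemidef.dotProduct_mulVec_nonneg w
    simpa using this
  have hpos : ∀ w : Fin n → ℝ, w ≠ 0 → 0 < w ⬝ᵥ (R *ᵥ w) := by
    intro w hw
    have := hR.dotProduct_mulVec_pos hw
    simpa using this
  rcases hcases with h | h
  · exact add_pos_of_pos_of_nonneg (hpos u h) (hnn v)
  · exact add_pos_of_nonneg_of_pos (hnn u) (hpos v h)

variable {n : ℕ}

-- Step A building block
lemma bilin_conj (D : Matrix (Fin n) (Fin n) ℝ) (V : Matrix (Fin n) (Fin n) ℂ) (x y : Fin n → ℂ) :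
    star ((D.map Complex.ofReal) *ᵥ x) ⬝ᵥ (V *ᵥ ((D.map Complex.ofReal) *ᵥ y))
      = star x ⬝ᵥ (((D.map Complex.ofReal)ᵀ * V * (D.map Complex.ofReal)) *ᵥ y) := by
  have hstar : star ((D.map Complex.ofReal) *ᵥ x) = (D.map Complex.ofReal) *ᵥ (star x) := by
    funext i
    simp only [Pi.star_apply, Matrix.mulVec, dotProduct, Matrix.map_apply, star_sum,
      star_mul']
    exact Finset.sum_congr rfl fun j _ => by
      rw [Complex.star_def, Complex.conj_ofReal, mul_comm]
  rw [hstar]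
  have hr : ((D.map Complex.ofReal)ᵀ * V * (D.map Complex.ofReal)) *ᵥ y
      = (D.map Complex.ofReal)ᵀ *ᵥ (V *ᵥ ((D.map Complex.ofReal) *ᵥ y)) := by
    rw [Matrix.mulVec_mulVec, Matrix.mulVec_mulVec]
  rw [hr, Matrix.dotProduct_mulVec (star x), Matrix.vecMul_transpose]

set_option maxHeartbeats 2000000 in
lemma key_lt_one (hn : 0 < n) (D₁ D₂ R : Matrix (Fin n) (Fin n) ℝ) (hR : R.PosDef)
    (hsum : D₁ᵀ * D₁ + D₂ᵀ * D₂ = 1 - R) (lam : ℂ) (V : Matrix (Fin n) (Fin n) ℂ) (hV : V ≠ 0)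
    (heig : (D₁.map Complex.ofReal)ᵀ * V * (D₁.map Complex.ofReal)
      + (D₂.map Complex.ofReal)ᵀ * V * (D₂.map Complex.ofReal) = lam • V) :
    ‖lam‖ < 1 := by
  set E₁ := D₁.map Complex.ofReal with hE₁
  set E₂ := D₂.map Complex.ofReal with hE₂
  set b : (Fin n → ℂ) → (Fin n → ℂ) → ℂ := fun x y => star x ⬝ᵥ (V *ᵥ y) with hb
  -- Step A
  have stepA : ∀ x y, b (E₁ *ᵥ x) (E₁ *ᵥ y) + b (E₂ *ᵥ x) (E₂ *ᵥ y) = lam * b x y := by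
    intro x y
    simp only [hb]
    rw [bilin_conj D₁ V x y, bilin_conj D₂ V x y, ← dotProduct_add, ← Matrix.add_mulVec,
      ← hE₁, ← hE₂, heig, Matrix.smul_mulVec, dotProduct_smul, smul_eq_mul]
  -- mapped Lyapunov identity
  have hmap : E₁ᵀ * E₁ + E₂ᵀ * E₂ = 1 - R.map Complex.ofReal := by
    ext i j
    have hentry : (D₁ᵀ * D₁ + D₂ᵀ * D₂) i j = (1 - R) i j := by rw [hsum]
    simp only [Matrix.add_apply, Matrix.mul_apply, Matrix.transpose_apply, Matrix.sub_apply,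
      Matrix.one_apply, Matrix.map_apply, hE₁, hE₂] at hentry ⊢
    have h2 := congrArg Complex.ofReal hentry
    push_cast [apply_ite Complex.ofReal] at h2
    exact h2
  -- Step B
  have stepB : ∀ x : Fin n → ℂ, qf (E₁ *ᵥ x) + qf (E₂ *ᵥ x)
      = qf x - (star x ⬝ᵥ ((R.map Complex.ofReal) *ᵥ x)).re := by
    intro x
    have h1 : ((qf (E₁ *ᵥ x) + qf (E₂ *ᵥ x) : ℝ) : ℂ)
        = star x ⬝ᵥ ((1 - R.map Complex.ofReal) *ᵥ x) := by
      push_cast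
      rw [← qf_eq_dot, ← qf_eq_dot]
      have e1 := bilin_conj D₁ 1 x x
      have e2 := bilin_conj D₂ 1 x x
      simp only [Matrix.one_mulVec, Matrix.mul_one] at e1 e2
      rw [e1, e2, ← dotProduct_add, ← Matrix.add_mulVec]
      have : E₁ᵀ * E₁ + E₂ᵀ * E₂ = (1 : Matrix (Fin n) (Fin n) ℂ) - R.map Complex.ofReal := hmap
      rw [← hE₁, ← hE₂, this]
    have h2 : star x ⬝ᵥ ((1 - R.map Complex.ofReal) *ᵥ x)
        = (qf x : ℂ) - star x ⬝ᵥ ((R.map Complex.ofReal) *ᵥ x) := by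
      rw [Matrix.sub_mulVec, dotProduct_sub, Matrix.one_mulVec, qf_eq_dot]
    have := congrArg Complex.re (h1.trans h2)
    simpa using this
  -- topology
  set Ssp : Set (Fin n → ℂ) := {x | qf x = 1} with hSsp
  have hqcont : Continuous (qf : (Fin n → ℂ) → ℝ) := by
    apply continuous_finset_sum
    exact fun i _ => Complex.continuous_normSq.comp (continuous_apply i)
  have hScl : IsClosed Ssp := isClosed_eq hqcont continuous_const
  have hKcl : IsClosed (Ssp ×ˢ Ssp) := hScl.prod hScl
  have hKbd : Bornology.IsBounded (Ssp ×ˢ Ssp) := by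
    apply Bornology.IsBounded.subset (Metric.isBounded_closedBall (x := (0 : (Fin n → ℂ) × (Fin n → ℂ))) (r := 1))
    rintro ⟨x, y⟩ ⟨hx, hy⟩
    rw [Metric.mem_closedBall, dist_zero_right]
    have key : ∀ z : Fin n → ℂ, qf z = 1 → ‖z‖ ≤ 1 := by
      intro z hz
      rw [pi_norm_le_iff_of_nonneg zero_le_one]
      intro i
      have h1 : Complex.normSq (z i) ≤ 1 := by
        rw [← hz]
        exact Finset.single_le_sum (fun k _ => Complex.normSq_nonneg (z k)) (Finset.mem_univ i)
      have h2 : ‖z i‖ ^ 2 = Complex.normSq (z i) := by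
        rw [← Complex.sq_norm]
      nlinarith [norm_nonneg (z i)]
    have := key x hx
    have := key y hy
    rw [Prod.norm_def]
    exact max_le ‹_› ‹_›
  have hKcomp : IsCompact (Ssp ×ˢ Ssp) := Metric.isCompact_of_isClosed_isBounded hKcl hKbd
  have hq_single : ∀ i : Fin n, qf (Pi.single i (1:ℂ)) = 1 := by
    intro i
    simp [qf, Pi.single_apply, apply_ite Complex.normSq, Finset.sum_ite_eq']
  have hKne : (Ssp ×ˢ Ssp).Nonempty := by
    refine ⟨(Pi.single ⟨0, hn⟩ 1, Pi.single ⟨0, hn⟩ 1), ?_, ?_⟩ <;>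
      simpa [hSsp] using hq_single ⟨0, hn⟩
  have hbcont : Continuous (fun p : (Fin n → ℂ) × (Fin n → ℂ) => ‖b p.1 p.2‖) := by
    apply continuous_norm.comp
    simp only [hb, dotProduct, Matrix.mulVec]
    apply continuous_finset_sum
    intro i _
    apply Continuous.mul
    · exact continuous_star.comp ((continuous_apply i).comp continuous_fst)
    · exact continuous_finset_sum _ fun j _ =>
        (continuous_const.mul ((continuous_apply j).comp continuous_snd))
  obtain ⟨p₀, hp₀, hmax⟩ := hKcomp.exists_isMaxOn hKne hbcont.continuousOn
  set N : ℝ := ‖b p₀.1 p₀.2‖ with hN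
  have hNnn : 0 ≤ N := norm_nonneg _
  -- Step D : scaling bound
  have hNb : ∀ x y, ‖b x y‖ ≤ N * Real.sqrt (qf x) * Real.sqrt (qf y) := by
    intro x y
    by_cases hx0 : x = 0
    · simp [hb, hx0]
      positivity
    by_cases hy0 : y = 0
    · simp [hb, hy0]
      positivity
    have hqx : 0 < qf x := lt_of_le_of_ne (qf_nonneg x) (fun h => hx0 ((qf_eq_zero_iff x).mp h.symm))
    have hqy : 0 < qf y := lt_of_le_of_ne (qf_nonneg y) (fun h => hy0 ((qf_eq_zero_iff y).mp h.symm))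
    set a := Real.sqrt (qf x) with hadef
    set c := Real.sqrt (qf y) with hcdef
    have ha : 0 < a := Real.sqrt_pos.mpr hqx
    have hc : 0 < c := Real.sqrt_pos.mpr hqy
    have haa : a * a = qf x := Real.mul_self_sqrt hqx.le
    have hcc : c * c = qf y := Real.mul_self_sqrt hqy.le
    have hqsmul : ∀ (r : ℝ) (z : Fin n → ℂ), qf ((r : ℂ) • z) = r * r * qf z := by
      intro r z
      simp [qf, Complex.normSq_mul, Complex.normSq_ofReal, Finset.mul_sum]
    have hx' : qf (((a⁻¹ : ℝ) : ℂ) • x) = 1 := by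
      rw [hqsmul]
      field_simp
      nlinarith
    have hy' : qf (((c⁻¹ : ℝ) : ℂ) • y) = 1 := by
      rw [hqsmul]
      field_simp
      nlinarith
    have hmem : ((((a⁻¹ : ℝ) : ℂ) • x, ((c⁻¹ : ℝ) : ℂ) • y) : (Fin n → ℂ) × (Fin n → ℂ)) ∈ Ssp ×ˢ Ssp :=
      Set.mem_prod.mpr ⟨hx', hy'⟩
    have hm0 := hmax hmem
    have hm : ‖b (((a⁻¹ : ℝ) : ℂ) • x) (((c⁻¹ : ℝ) : ℂ) • y)‖ ≤ N := hm0
    have hbval : b (((a⁻¹ : ℝ) : ℂ) • x) (((c⁻¹ : ℝ) : ℂ) • y)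
        = ((a⁻¹ : ℝ) : ℂ) * (((c⁻¹ : ℝ) : ℂ) * b x y) := by
      simp only [hb, star_smul, smul_dotProduct, Matrix.mulVec_smul, dotProduct_smul,
        smul_eq_mul]
      rw [Complex.star_def, Complex.conj_ofReal]
      ring
    rw [hbval] at hm
    simp only [norm_mul, Complex.norm_real, Real.norm_eq_abs, abs_of_pos (inv_pos.mpr ha),
      abs_of_pos (inv_pos.mpr hc)] at hm
    calc ‖b x y‖ = (a * c) * (a⁻¹ * (c⁻¹ * ‖b x y‖)) := by
          field_simp
      _ ≤ (a * c) * N := by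
          apply mul_le_mul_of_nonneg_left hm (by positivity)
      _ = N * a * c := by ring
  -- Step E : N > 0
  have hNpos : 0 < N := by
    have : ∃ i j, V i j ≠ 0 := by
      by_contra h
      push_neg at h
      exact hV (by ext i j; exact h i j)
    obtain ⟨i, j, hVij⟩ := this
    have hbij : b (Pi.single i (1:ℂ)) (Pi.single j (1:ℂ)) = V i j := by
      simp [hb, Matrix.mulVec_single, dotProduct, Pi.single_apply,
        apply_ite (star : ℂ → ℂ), Finset.sum_ite_eq]
    have h1 := hNb (Pi.single i (1:ℂ)) (Pi.single j (1:ℂ))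
    rw [hbij, hq_single i, hq_single j] at h1
    simp only [Real.sqrt_one, mul_one] at h1
    exact lt_of_lt_of_le (norm_pos_iff.mpr hVij) h1
  -- final computation
  obtain ⟨hx₀, hy₀⟩ := hp₀
  set x₀ := p₀.1
  set y₀ := p₀.2
  have hqx₀ : qf x₀ = 1 := hx₀
  have hqy₀ : qf y₀ = 1 := hy₀
  have hx₀ne : x₀ ≠ 0 := by
    intro h
    have := (qf_eq_zero_iff x₀).mpr h
    rw [hqx₀] at this
    norm_num at this
  have hy₀ne : y₀ ≠ 0 := by
    intro h
    have := (qf_eq_zero_iff y₀).mpr h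
    rw [hqy₀] at this
    norm_num at this
  set rx : ℝ := (star x₀ ⬝ᵥ ((R.map Complex.ofReal) *ᵥ x₀)).re with hrxdef
  set ry : ℝ := (star y₀ ⬝ᵥ ((R.map Complex.ofReal) *ᵥ y₀)).re with hrydef
  have hrx : 0 < rx := posdef_complexify hR x₀ hx₀ne
  have hry : 0 < ry := posdef_complexify hR y₀ hy₀ne
  set a₁ := Real.sqrt (qf (E₁ *ᵥ x₀)) with ha₁
  set a₂ := Real.sqrt (qf (E₂ *ᵥ x₀)) with ha₂
  set c₁ := Real.sqrt (qf (E₁ *ᵥ y₀)) with hc₁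
  set c₂ := Real.sqrt (qf (E₂ *ᵥ y₀)) with hc₂
  have ha₁nn : 0 ≤ a₁ := Real.sqrt_nonneg _
  have ha₂nn : 0 ≤ a₂ := Real.sqrt_nonneg _
  have hc₁nn : 0 ≤ c₁ := Real.sqrt_nonneg _
  have hc₂nn : 0 ≤ c₂ := Real.sqrt_nonneg _
  have hax : a₁ ^ 2 + a₂ ^ 2 = 1 - rx := by
    rw [ha₁, ha₂, Real.sq_sqrt (qf_nonneg _), Real.sq_sqrt (qf_nonneg _), stepB x₀, hqx₀]
  have hcy : c₁ ^ 2 + c₂ ^ 2 = 1 - ry := by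
    rw [hc₁, hc₂, Real.sq_sqrt (qf_nonneg _), Real.sq_sqrt (qf_nonneg _), stepB y₀, hqy₀]
  have hchain : ‖lam‖ * N ≤ N * (a₁ * c₁ + a₂ * c₂) := by
    have h1 : ‖lam‖ * N = ‖lam * b x₀ y₀‖ := by
      rw [norm_mul]
    rw [h1, ← stepA x₀ y₀]
    calc ‖b (E₁ *ᵥ x₀) (E₁ *ᵥ y₀) + b (E₂ *ᵥ x₀) (E₂ *ᵥ y₀)‖
        ≤ ‖b (E₁ *ᵥ x₀) (E₁ *ᵥ y₀)‖ + ‖b (E₂ *ᵥ x₀) (E₂ *ᵥ y₀)‖ :=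
          norm_add_le _ _
      _ ≤ N * a₁ * c₁ + N * a₂ * c₂ := add_le_add (hNb _ _) (hNb _ _)
      _ = N * (a₁ * c₁ + a₂ * c₂) := by ring
  have hs1 : a₁ * c₁ + a₂ * c₂ < 1 := by
    have hsq : (a₁ * c₁ + a₂ * c₂) ^ 2 ≤ (a₁ ^ 2 + a₂ ^ 2) * (c₁ ^ 2 + c₂ ^ 2) := by
      nlinarith [sq_nonneg (a₁ * c₂ - a₂ * c₁)]
    have h1x : 0 ≤ 1 - rx := by nlinarith [sq_nonneg a₁, sq_nonneg a₂]
    have h1y : 0 ≤ 1 - ry := by nlinarith [sq_nonneg c₁, sq_nonneg c₂]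
    nlinarith [mul_nonneg (mul_nonneg ha₁nn hc₁nn) (mul_nonneg ha₂nn hc₂nn),
      mul_nonneg ha₁nn hc₁nn, mul_nonneg ha₂nn hc₂nn]
  nlinarith [hchain, hs1, hNpos, norm_nonneg lam]
end main


variable {n : ℕ}

private lemma trace_form_eq {n : ℕ} (φ : Matrix (Fin n) (Fin n) ℂ →ₗ[ℂ] ℂ) (Z : Matrix (Fin n) (Fin n) ℂ) :
    trace ((Matrix.of (fun i j => φ (Matrix.single j i 1))) * Z) = φ Z := by
  conv_rhs => rw [Matrix.matrix_eq_sum_single Z]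
  rw [map_sum]
  simp only [map_sum]
  have : ∀ (i j : Fin n), φ (Matrix.single i j (Z i j)) = Z i j * φ (Matrix.single i j 1) := by
    intro i j
    have h : Matrix.single i j (Z i j) = Z i j • Matrix.single i j 1 := by
      rw [Matrix.smul_single, smul_eq_mul, mul_one]
    rw [h, _root_.map_smul, smul_eq_mul]
  simp only [this]
  simp only [Matrix.trace, Matrix.diag, Matrix.mul_apply, Matrix.of_apply]
  rw [Finset.sum_comm]
  exact Finset.sum_congr rfl fun i _ => Finset.sum_congr rfl fun j _ => mul_comm _ _

private lemma trace_nondegen {n : ℕ} (N : Matrix (Fin n) (Fin n) ℂ)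
    (h : ∀ Z, trace (N * Z) = 0) : N = 0 := by
  ext i j
  have := h (Matrix.single j i 1)
  simpa [Matrix.trace, Matrix.diag, Matrix.mul_apply, Matrix.single, Finset.sum_ite_eq,
    ite_and] using this

private lemma dual_eigen {n : ℕ}
    (f g : Matrix (Fin n) (Fin n) ℂ →ₗ[ℂ] Matrix (Fin n) (Fin n) ℂ)
    (hadj : ∀ W Z, trace (W * f Z) = trace (g W * Z))
    (lam : ℂ) (X : Matrix (Fin n) (Fin n) ℂ) (hX : X ≠ 0) (hfX : f X = lam • X) :
    ∃ W, W ≠ 0 ∧ g W = lam • W := by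
  set F : Matrix (Fin n) (Fin n) ℂ →ₗ[ℂ] Matrix (Fin n) (Fin n) ℂ := f - lam • LinearMap.id with hF
  have hFX : F X = 0 := by simp [hF, hfX]
  have hninj : ¬ Function.Injective F := by
    intro h
    exact hX (h (by simpa using hFX))
  have hnsurj : ¬ Function.Surjective F := fun h => hninj (LinearMap.injective_iff_surjective.mpr h)
  have hrange : LinearMap.range F < ⊤ := by
    rcases lt_or_eq_of_le (le_top : LinearMap.range F ≤ ⊤) with h | h
    · exact h
    · exact absurd (LinearMap.range_eq_top.mp h) hnsurj
  haveI := Submodule.Quotient.nontrivial_iff.mpr hrange.ne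
  obtain ⟨w, hw⟩ := exists_ne (0 : Matrix (Fin n) (Fin n) ℂ ⧸ LinearMap.range F)
  have : ¬ (∀ (ψ : Module.Dual ℂ (Matrix (Fin n) (Fin n) ℂ ⧸ LinearMap.range F)), ψ w = 0) := by
    rw [Module.forall_dual_apply_eq_zero_iff]
    exact hw
  push_neg at this
  obtain ⟨ψ, hψ⟩ := this
  set φ : Matrix (Fin n) (Fin n) ℂ →ₗ[ℂ] ℂ := ψ.comp (LinearMap.range F).mkQ with hφ
  have hφF : ∀ Z, φ (F Z) = 0 := by
    intro Z
    have : (LinearMap.range F).mkQ (F Z) = 0 := by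
      rw [Submodule.mkQ_apply, Submodule.Quotient.mk_eq_zero]
      exact LinearMap.mem_range_self F Z
    simp [hφ, this]
  have hφne : φ ≠ 0 := by
    obtain ⟨u, hu⟩ := Submodule.mkQ_surjective (LinearMap.range F) w
    intro h
    apply hψ
    rw [← hu]
    have := congrFun (congrArg DFunLike.coe h) u
    simpa [hφ] using this
  set W : Matrix (Fin n) (Fin n) ℂ := Matrix.of (fun i j => φ (Matrix.single j i 1)) with hW
  have htr : ∀ Z, trace (W * Z) = φ Z := trace_form_eq φ
  refine ⟨W, ?_, ?_⟩
  · intro h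
    apply hφne
    ext Z
    rw [← htr Z, h, zero_mul, trace_zero]; rfl
  · have key : ∀ Z, trace ((g W - lam • W) * Z) = 0 := by
      intro Z
      have h1 : trace (W * F Z) = 0 := by rw [htr]; exact hφF Z
      have h2 : F Z = f Z - lam • Z := by simp [hF]
      rw [h2] at h1
      rw [Matrix.sub_mul, trace_sub, Matrix.smul_mul, trace_smul]
      rw [mul_sub, trace_sub, Matrix.mul_smul, trace_smul] at h1
      rw [hadj W Z] at h1
      linear_combination h1
    have := trace_nondegen _ key
    exact sub_eq_zero.mp this

section glue
variable {n : ℕ}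

private lemma cmul (M N : Matrix (Fin n) (Fin n) ℝ) :
    (M * N).map Complex.ofReal = M.map Complex.ofReal * N.map Complex.ofReal :=
  Matrix.map_mul (f := Complex.ofRealHom)

private lemma cone : ((1 : Matrix (Fin n) (Fin n) ℝ).map Complex.ofReal) = 1 :=
  Matrix.map_one _ Complex.ofReal_zero Complex.ofReal_one

private lemma ctrans (M : Matrix (Fin n) (Fin n) ℝ) :
    (Mᵀ).map Complex.ofReal = (M.map Complex.ofReal)ᵀ :=
  Matrix.transpose_map

end glue

open scoped MatrixOrder

set_option maxHeartbeats 1000000 in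
theorem stmt_16 {n : ℕ}
    (A C : Matrix (Fin n) (Fin n) ℝ)
    (S Q : Matrix (Fin n) (Fin n) ℝ) (hS : S.PosDef) (hQ : Q.PosDef)
    (hLyap : Aᵀ * S * A + Cᵀ * S * C + Q = S)
    (lam : ℂ) (X : Matrix (Fin n) (Fin n) ℂ) (hXsym : Xᵀ = X) (hX0 : X ≠ 0)
    (hEig : (A.map (Complex.ofReal)) * X * (A.map (Complex.ofReal))ᵀ
        + (C.map (Complex.ofReal)) * X * (C.map (Complex.ofReal))ᵀ = lam • X) :
    ‖lam‖ < 1 := by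
  rcases Nat.eq_zero_or_pos n with hn | hn
  · subst hn
    exact absurd (by ext i j; exact i.elim0) hX0
  -- Part 1 : dual eigenvector
  set A' := A.map Complex.ofReal with hA'
  set C' := C.map Complex.ofReal with hC'
  set f : Matrix (Fin n) (Fin n) ℂ →ₗ[ℂ] Matrix (Fin n) (Fin n) ℂ :=
    { toFun := fun Z => A' * Z * A'ᵀ + C' * Z * C'ᵀ
      map_add' := fun Z W => by simp only [Matrix.mul_add, Matrix.add_mul]; abel
      map_smul' := fun c Z => by
        simp only [Matrix.mul_smul, Matrix.smul_mul, RingHom.id_apply, smul_add] } with hf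
  set g : Matrix (Fin n) (Fin n) ℂ →ₗ[ℂ] Matrix (Fin n) (Fin n) ℂ :=
    { toFun := fun Z => A'ᵀ * Z * A' + C'ᵀ * Z * C'
      map_add' := fun Z W => by simp only [Matrix.mul_add, Matrix.add_mul]; abel
      map_smul' := fun c Z => by
        simp only [Matrix.mul_smul, Matrix.smul_mul, RingHom.id_apply, smul_add] } with hg
  have hadj : ∀ W Z, trace (W * f Z) = trace (g W * Z) := by
    intro W Z
    have hA1 : W * (A' * Z * A'ᵀ) = (W * A' * Z) * A'ᵀ := by simp only [Matrix.mul_assoc]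
    have hA2 : A'ᵀ * (W * A' * Z) = (A'ᵀ * W * A') * Z := by simp only [Matrix.mul_assoc]
    have hC1 : W * (C' * Z * C'ᵀ) = (W * C' * Z) * C'ᵀ := by simp only [Matrix.mul_assoc]
    have hC2 : C'ᵀ * (W * C' * Z) = (C'ᵀ * W * C') * Z := by simp only [Matrix.mul_assoc]
    show trace (W * (A' * Z * A'ᵀ + C' * Z * C'ᵀ))
        = trace ((A'ᵀ * W * A' + C'ᵀ * W * C') * Z)
    rw [Matrix.mul_add, trace_add, Matrix.add_mul, trace_add, hA1, hC1,
      Matrix.trace_mul_comm (W * A' * Z) A'ᵀ, Matrix.trace_mul_comm (W * C' * Z) C'ᵀ,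
      hA2, hC2]
  have hfX : f X = lam • X := hEig
  obtain ⟨W, hW0, hgW⟩ := dual_eigen f g hadj lam X hX0 hfX
  have hgW' : A'ᵀ * W * A' + C'ᵀ * W * C' = lam • W := hgW
  -- Part 2 : real transformation
  set T := CFC.sqrt S with hTdef
  have hTT : T * T = S := CFC.sqrt_mul_sqrt_self S hS.posSemidef.nonneg
  have hTsym : Tᵀ = T := by
    have h := (CFC.sqrt_nonneg S).posSemidef.isHermitian
    rwa [Matrix.IsHermitian, Matrix.conjTranspose_eq_transpose_of_trivial] at h
  have hdet : IsUnit T.det := by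
    refine isUnit_iff_ne_zero.mpr fun h => ?_
    have h1 : T.det * T.det = S.det := by rw [← Matrix.det_mul, hTT]
    rw [h, mul_zero] at h1
    exact absurd h1.symm (ne_of_gt hS.det_pos)
  have hT1 : T * T⁻¹ = 1 := Matrix.mul_nonsing_inv _ hdet
  have hT2 : T⁻¹ * T = 1 := Matrix.nonsing_inv_mul _ hdet
  have hTisym : (T⁻¹)ᵀ = T⁻¹ := by rw [Matrix.transpose_nonsing_inv, hTsym]
  set R := T⁻¹ * Q * T⁻¹ with hRdef
  have hQsym : Qᵀ = Q := by
    have h := hQ.isHermitian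
    rwa [Matrix.IsHermitian, Matrix.conjTranspose_eq_transpose_of_trivial] at h
  have hRpd : R.PosDef := by
    refine Matrix.PosDef.of_dotProduct_mulVec_pos ?_ ?_
    · rw [Matrix.IsHermitian, Matrix.conjTranspose_eq_transpose_of_trivial, hRdef,
        Matrix.transpose_mul, Matrix.transpose_mul, hTisym, hQsym, Matrix.mul_assoc]
    · intro x hx
      have hy : T⁻¹ *ᵥ x ≠ 0 := by
        intro h
        apply hx
        have hxx : (T * T⁻¹) *ᵥ x = x := by rw [hT1, Matrix.one_mulVec]
        rw [← hxx, ← Matrix.mulVec_mulVec, h, Matrix.mulVec_zero]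
      have hkey : star x ⬝ᵥ (R *ᵥ x) = star (T⁻¹ *ᵥ x) ⬝ᵥ (Q *ᵥ (T⁻¹ *ᵥ x)) := by
        have hstar : ∀ z : Fin n → ℝ, star z = z := fun z => rfl
        rw [hstar, hstar, hRdef, ← Matrix.mulVec_mulVec, ← Matrix.mulVec_mulVec]
        rw [Matrix.dotProduct_mulVec x, ← hTisym, Matrix.vecMul_transpose, hTisym]
      rw [hkey]
      exact hQ.dotProduct_mulVec_pos hy
  have hL2 : Aᵀ * S * A + Cᵀ * S * C = S - Q := eq_sub_of_add_eq hLyap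
  set D₁ := T * A * T⁻¹ with hD₁def
  set D₂ := T * C * T⁻¹ with hD₂def
  have conj_mul : ∀ (M N : Matrix (Fin n) (Fin n) ℝ),
      (T * M * T⁻¹)ᵀ * (T * N * T⁻¹) = T⁻¹ * (Mᵀ * S * N) * T⁻¹ := by
    intro M N
    rw [Matrix.transpose_mul, Matrix.transpose_mul, hTsym, hTisym, ← hTT]
    simp only [Matrix.mul_assoc]
  have hsumD : D₁ᵀ * D₁ + D₂ᵀ * D₂ = 1 - R := by
    rw [hD₁def, hD₂def, conj_mul, conj_mul, ← Matrix.add_mul, ← Matrix.mul_add, hL2,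
      Matrix.mul_sub, Matrix.sub_mul, hRdef]
    congr 1
    rw [← hTT]
    calc T⁻¹ * (T * T) * T⁻¹ = T⁻¹ * (T * (T * T⁻¹)) * 1 := by
          rw [Matrix.mul_one]; simp only [Matrix.mul_assoc]
      _ = 1 := by rw [hT1, Matrix.mul_one, ← Matrix.mul_assoc, hT2, Matrix.one_mul]
  -- Part 2b : complex transformation
  set T' := T.map Complex.ofReal with hT'def
  set Ti' := T⁻¹.map Complex.ofReal with hTi'def
  have hc1 : T' * Ti' = 1 := by rw [hT'def, hTi'def, ← cmul, hT1, cone]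
  have hc2 : Ti' * T' = 1 := by rw [hT'def, hTi'def, ← cmul, hT2, cone]
  have hLc1 : ∀ x : Matrix (Fin n) (Fin n) ℂ, T' * (Ti' * x) = x := fun x => by
    rw [← Matrix.mul_assoc, hc1, Matrix.one_mul]
  have hLc2 : ∀ x : Matrix (Fin n) (Fin n) ℂ, Ti' * (T' * x) = x := fun x => by
    rw [← Matrix.mul_assoc, hc2, Matrix.one_mul]
  have hT'sym : T'ᵀ = T' := by rw [hT'def, ← ctrans, hTsym]
  have hTi'sym : Ti'ᵀ = Ti' := by rw [hTi'def, ← ctrans, hTisym]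
  set V := Ti' * W * Ti' with hVdef
  have hV0 : V ≠ 0 := by
    intro h
    apply hW0
    have hWeq : W = T' * V * T' := by
      rw [hVdef]
      simp only [Matrix.mul_assoc, hLc1]
      rw [hc2, Matrix.mul_one]
    rw [hWeq, h, Matrix.mul_zero, Matrix.zero_mul]
  have collapse : ∀ (B : Matrix (Fin n) (Fin n) ℝ) (W' : Matrix (Fin n) (Fin n) ℂ),
      ((T * B * T⁻¹).map Complex.ofReal)ᵀ * (Ti' * W' * Ti') * ((T * B * T⁻¹).map Complex.ofReal)
        = Ti' * ((B.map Complex.ofReal)ᵀ * W' * (B.map Complex.ofReal)) * Ti' := by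
    intro B W'
    rw [cmul, cmul, ← hT'def, ← hTi'def]
    rw [Matrix.transpose_mul, Matrix.transpose_mul, hT'sym, hTi'sym]
    simp only [Matrix.mul_assoc, hLc1, hLc2]
  have heigV : (D₁.map Complex.ofReal)ᵀ * V * (D₁.map Complex.ofReal)
      + (D₂.map Complex.ofReal)ᵀ * V * (D₂.map Complex.ofReal) = lam • V := by
    rw [hVdef, hD₁def, hD₂def, collapse A W, collapse C W, ← Matrix.add_mul, ← Matrix.mul_add]
    rw [← hA', ← hC', hgW']
    rw [Matrix.mul_smul, Matrix.smul_mul]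
  exact key_lt_one hn D₁ D₂ R hRpd hsumD lam V hV0 heigV
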